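/- If a cube complex admits a regular decomposition of length m (i.e., it is collapsible in m steps), then its set of hyperplanes is m-colorable: there is a map Φ from hyperplanes to {1,…,m} with Φ(𝔥) ≠ Φ(𝔥') whenever 𝔥 and 𝔥' intersect. -/

import Mathlib

/-- The metric interval between two vertices of a graph (with the path metric). -/
def gInterval {V : Type} (G : SimpleGraph V) (x y : V) : Set V :=
  {w | G.dist x w + G.dist w y = G.dist x y}

/-- A vertex set is convex if it contains all metric intervals between its points. -/
def GConvex {V : Type} (G : SimpleGraph V) (H : Set V) : Prop :=
  ∀ x ∈ H, ∀ y ∈ H, gInterval G x y ⊆ H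

/-- A graph is median if it is connected and every triple of vertices has a unique
median, i.e. a unique vertex lying in all three pairwise metric intervals. -/
def IsMedianGraph {V : Type} (G : SimpleGraph V) : Prop :=
  G.Connected ∧ ∀ x y z : V,
    ∃! w, w ∈ gInterval G x y ∧ w ∈ gInterval G y z ∧ w ∈ gInterval G x z

/-- A vertex set is a halfspace if it and its complement are nonempty and convex. -/
def IsHalfspace {V : Type} (G : SimpleGraph V) (H : Set V) : Prop :=
  H.Nonempty ∧ Hᶜ.Nonempty ∧ GConvex G H ∧ GConvex G Hᶜ

/-- The 1-skeleton of `𝒞 ∪ ⋃ᵢ (ℒᵢ × [0,1])`: for each `j` a new copy of the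
subcomplex `L j` is added, with each new vertex joined to its base vertex. -/
def glueGraph {V : Type} (G : SimpleGraph V) {J : Type} (L : J → Set V) :
    SimpleGraph (V ⊕ Σ j : J, ↥(L j)) :=
  SimpleGraph.fromRel (fun a b =>
    match a, b with
    | .inl a, .inl b => G.Adj a b
    | .inl a, .inr b => a = ↑b.2
    | .inr _, .inl _ => False
    | .inr a, .inr b => a.1 = b.1 ∧ G.Adj ↑a.2 ↑b.2)

/-- Two halfspaces cross (equivalently, the corresponding hyperplanes intersect)
if all four corner intersections are nonempty. -/
def Crossing {V : Type} (H K : Set V) : Prop :=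
  (H ∩ K).Nonempty ∧ (H ∩ Kᶜ).Nonempty ∧ (Hᶜ ∩ K).Nonempty ∧ (Hᶜ ∩ Kᶜ).Nonempty

/-- Collapsibility (of the underlying graph of a cube complex) in `m` steps:
starting from a single point, each step glues a family of products of connected
subcomplexes with an interval. -/
inductive Collapsible : ∀ {V : Type}, SimpleGraph V → ℕ → Prop
  | point {V : Type} (G : SimpleGraph V) (v : V) (hv : ∀ w, w = v) : Collapsible G 0
  | glue {V : Type} {G : SimpleGraph V} {m : ℕ} (hG : Collapsible G m)
      {J : Type} (L : J → Set V)
      (hL : ∀ j, (L j).Nonempty ∧ (G.induce (L j)).Connected)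
      {V' : Type} (G' : SimpleGraph V') (e : G' ≃g glueGraph G L) :
      Collapsible G' (m + 1)

namespace Glue

variable {V : Type} {G : SimpleGraph V} {J : Type} {L : J → Set V}

/-- projection to the base -/
def proj : (V ⊕ Σ j : J, ↥(L j)) → V := Sum.elim id (fun a => ↑a.2)

lemma adj_inl_inl {a b : V} : (glueGraph G L).Adj (.inl a) (.inl b) ↔ G.Adj a b := by
  simp only [glueGraph, SimpleGraph.fromRel_adj]
  constructor
  · rintro ⟨-, h | h⟩
    · exact h
    · exact h.symm
  · exact fun h => ⟨by simp [h.ne], Or.inl h⟩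

lemma adj_inl_inr {a : V} {b : Σ j : J, ↥(L j)} :
    (glueGraph G L).Adj (.inl a) (.inr b) ↔ a = ↑b.2 := by
  simp only [glueGraph, SimpleGraph.fromRel_adj]
  constructor
  · rintro ⟨-, h | h⟩
    · exact h
    · exact h.elim
  · exact fun h => ⟨by simp, Or.inl h⟩

lemma adj_inr_inr {a b : Σ j : J, ↥(L j)} :
    (glueGraph G L).Adj (.inr a) (.inr b) ↔ a.1 = b.1 ∧ G.Adj ↑a.2 ↑b.2 := by
  simp only [glueGraph, SimpleGraph.fromRel_adj]
  constructor
  · rintro ⟨-, h | h⟩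
    · exact h
    · exact ⟨h.1.symm, h.2.symm⟩
  · rintro ⟨h1, h2⟩
    refine ⟨?_, Or.inl ⟨h1, h2⟩⟩
    intro h
    injection h with h
    subst h
    exact h2.ne rfl

def inlHom (G : SimpleGraph V) (L : J → Set V) : G →g glueGraph G L where
  toFun := Sum.inl
  map_rel' := fun h => adj_inl_inl.mpr h

lemma adj_vert {b : Σ j : J, ↥(L j)} : (glueGraph G L).Adj (.inl ↑b.2) (.inr b) :=
  adj_inl_inr.mpr rfl

lemma glue_connected (hG : G.Connected) : (glueGraph G L).Connected := by
  have hne : Nonempty V := hG.nonempty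
  rw [SimpleGraph.connected_iff]
  refine ⟨?_, ⟨Sum.inl hne.some⟩⟩
  have key : ∀ u : V ⊕ Σ j : J, ↥(L j), (glueGraph G L).Reachable u (.inl (proj u)) := by
    rintro (x | b)
    · exact SimpleGraph.Reachable.refl _
    · exact (SimpleGraph.Adj.reachable adj_vert).symm
  intro u v
  refine (key u).trans (SimpleGraph.Reachable.trans ?_ (key v).symm)
  have : G.Reachable (proj u) (proj v) := hG.preconnected _ _
  obtain ⟨p⟩ := this
  exact ⟨p.map (inlHom G L)⟩

open Classical in
/-- the crossing weight -/
noncomputable def kap : Option J → Option J → ℕ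
  | none, none => 0
  | none, some _ => 1
  | some _, none => 1
  | some j, some j' => if j = j' then 0 else 2

def tag : (V ⊕ Σ j : J, ↥(L j)) → Option J := Sum.elim (fun _ => none) (fun a => some a.1)

lemma kap_self (t : Option J) : kap t t = 0 := by cases t <;> simp [kap]

lemma lb_walk (hG : G.Connected) :
    ∀ {u v : V ⊕ Σ j : J, ↥(L j)} (p : (glueGraph G L).Walk u v),
    G.dist (proj u) (proj v) + kap (tag u) (tag v) ≤ p.length := by
  intro u v p
  induction p with
  | nil => simp [kap_self]
  | @cons u w v h p ih =>
    rw [SimpleGraph.Walk.length_cons]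
    match u, w with
    | .inl a, .inl b =>
      have hab : G.Adj a b := adj_inl_inl.mp h
      have h1 : G.dist a (proj v) ≤ 1 + G.dist b (proj v) := by
        calc G.dist a (proj v) ≤ G.dist a b + G.dist b (proj v) :=
              hG.dist_triangle
          _ ≤ 1 + G.dist b (proj v) := by
              have := SimpleGraph.dist_eq_one_iff_adj.mpr hab
              omega
      simp only [proj, tag, Sum.elim_inl, Sum.elim_inr, id_eq] at *
      omega
    | .inl a, .inr b =>
      have hab : a = ↑b.2 := adj_inl_inr.mp h
      subst hab
      have h2 : kap (none : Option J) (tag v) ≤ 1 + kap (some b.1) (tag v) := by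
        cases htv : tag v with
        | none => simp [kap]
        | some j' =>
          by_cases hj : b.1 = j' <;> simp [kap, hj]
      simp only [proj, tag, Sum.elim_inl, Sum.elim_inr, id_eq] at *
      omega
    | .inr a, .inl b =>
      have hab : (↑a.2 : V) = b := (adj_inl_inr.mp h.symm).symm
      subst hab
      have h2 : kap (some a.1) (tag v) ≤ 1 + kap (none : Option J) (tag v) := by
        cases htv : tag v with
        | none => simp [kap]
        | some j' =>
          by_cases hj : a.1 = j' <;> simp [kap, hj]
      simp only [proj, tag, Sum.elim_inl, Sum.elim_inr, id_eq] at *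
      omega
    | .inr a, .inr b =>
      obtain ⟨hj, hab⟩ := adj_inr_inr.mp h
      have h1 : G.dist ↑a.2 (proj v) ≤ 1 + G.dist ↑b.2 (proj v) := by
        calc G.dist ↑a.2 (proj v) ≤ G.dist ↑a.2 ↑b.2 + G.dist ↑b.2 (proj v) :=
              hG.dist_triangle
          _ ≤ 1 + G.dist ↑b.2 (proj v) := by
              have := SimpleGraph.dist_eq_one_iff_adj.mpr hab
              omega
      simp only [proj, tag, Sum.elim_inl, Sum.elim_inr, id_eq, hj] at *
      omega

lemma dist_inl_inl (hG : G.Connected) (x y : V) :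
    (glueGraph G L).dist (.inl x) (.inl y) = G.dist x y := by
  refine le_antisymm ?_ ?_
  · obtain ⟨p, hp⟩ := (hG.preconnected x y).exists_walk_length_eq_dist
    calc (glueGraph G L).dist (.inl x) (.inl y) ≤ (p.map (inlHom G L)).length :=
          SimpleGraph.dist_le _
      _ = G.dist x y := by rw [SimpleGraph.Walk.length_map, hp]
  · obtain ⟨p, hp⟩ := ((glue_connected hG).preconnected (.inl x) (.inl y)
      ).exists_walk_length_eq_dist
    have := lb_walk (L := L) hG p
    simp only [proj, tag, Sum.elim_inl, id_eq, kap_self, hp] at this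
    omega

lemma dist_inl_inr (hG : G.Connected) (x : V) (b : Σ j : J, ↥(L j)) :
    (glueGraph G L).dist (.inl x) (.inr b) = G.dist x ↑b.2 + 1 := by
  refine le_antisymm ?_ ?_
  · obtain ⟨p, hp⟩ := (hG.preconnected x ↑b.2).exists_walk_length_eq_dist
    calc (glueGraph G L).dist (.inl x) (.inr b)
        ≤ ((p.map (inlHom G L)).concat adj_vert).length := SimpleGraph.dist_le _
      _ = G.dist x ↑b.2 + 1 := by
          have h2 := SimpleGraph.Walk.length_concat (p := p.map (inlHom G L)) (h := adj_vert)
          rw [SimpleGraph.Walk.length_map, hp] at h2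
          exact h2
  · obtain ⟨p, hp⟩ := ((glue_connected hG).preconnected (.inl x) (.inr b)
      ).exists_walk_length_eq_dist
    have := lb_walk (L := L) hG p
    simp only [proj, tag, Sum.elim_inl, Sum.elim_inr, id_eq, kap, hp] at this
    omega

lemma dist_inr_inl (hG : G.Connected) (x : V) (b : Σ j : J, ↥(L j)) :
    (glueGraph G L).dist (.inr b) (.inl x) = G.dist x ↑b.2 + 1 := by
  rw [SimpleGraph.dist_comm, dist_inl_inr hG]

lemma dist_inr_inr_ne (hG : G.Connected) {a b : Σ j : J, ↥(L j)} (hj : a.1 ≠ b.1) :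
    (glueGraph G L).dist (.inr a) (.inr b) = G.dist ↑a.2 ↑b.2 + 2 := by
  refine le_antisymm ?_ ?_
  · obtain ⟨p, hp⟩ := (hG.preconnected ↑a.2 ↑b.2).exists_walk_length_eq_dist
    have hadj : (glueGraph G L).Adj (.inr a) (.inl ↑a.2) := adj_vert.symm
    calc (glueGraph G L).dist (.inr a) (.inr b)
        ≤ (SimpleGraph.Walk.cons hadj ((p.map (inlHom G L)).concat adj_vert)).length :=
          SimpleGraph.dist_le _
      _ = G.dist ↑a.2 ↑b.2 + 2 := by
          have h1 := SimpleGraph.Walk.length_cons (h := hadj)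
            (p := (p.map (inlHom G L)).concat adj_vert)
          have h2 := SimpleGraph.Walk.length_concat (p := p.map (inlHom G L)) (h := adj_vert)
          rw [SimpleGraph.Walk.length_map, hp] at h2
          exact h1.trans (congrArg (· + 1) h2)
  · obtain ⟨p, hp⟩ := ((glue_connected hG).preconnected (.inr a) (.inr b)
      ).exists_walk_length_eq_dist
    have := lb_walk (L := L) hG p
    simp only [proj, tag, Sum.elim_inr, id_eq, kap, hp] at this
    rw [if_neg hj] at this
    omega

lemma interval_inl (hG : G.Connected) {x y w : V} (hw : w ∈ gInterval G x y) :
    (.inl w : V ⊕ Σ j : J, ↥(L j)) ∈ gInterval (glueGraph G L) (.inl x) (.inl y) := by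
  simp only [gInterval, Set.mem_setOf_eq, dist_inl_inl hG] at *
  exact hw

lemma interval_vert (hG : G.Connected) (b : Σ j : J, ↥(L j)) (y : V) :
    (.inl ↑b.2 : V ⊕ Σ j : J, ↥(L j)) ∈ gInterval (glueGraph G L) (.inr b) (.inl y) := by
  simp only [gInterval, Set.mem_setOf_eq, dist_inr_inl hG, dist_inl_inl hG]
  rw [SimpleGraph.dist_self, SimpleGraph.dist_comm (u := y) (v := (↑b.snd : V))]
  omega

lemma interval_two_vert (hG : G.Connected) {a b : Σ j : J, ↥(L j)} (hj : a.1 ≠ b.1) :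
    (.inl ↑a.2 : V ⊕ Σ j : J, ↥(L j)) ∈ gInterval (glueGraph G L) (.inr a) (.inr b) := by
  simp only [gInterval, Set.mem_setOf_eq, dist_inr_inl hG, dist_inl_inr hG,
    dist_inr_inr_ne hG hj]
  rw [SimpleGraph.dist_self]
  omega

lemma interval_boundary (hG : G.Connected) {a b : Σ j : J, ↥(L j)} (hj : a.1 = b.1)
    (hadj : G.Adj ↑a.2 ↑b.2) :
    (.inr a : V ⊕ Σ j : J, ↥(L j)) ∈ gInterval (glueGraph G L) (.inl ↑a.2) (.inr b) := by
  have h1 : (glueGraph G L).dist (.inl ↑a.2) (.inr a) = 1 := by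
    rw [dist_inl_inr hG, SimpleGraph.dist_self]
  have h2 : (glueGraph G L).dist (.inr a) (.inr b) = 1 :=
    SimpleGraph.dist_eq_one_iff_adj.mpr (adj_inr_inr.mpr ⟨hj, hadj⟩)
  have h3 : (glueGraph G L).dist (.inl ↑a.2) (.inr b) = 2 := by
    rw [dist_inl_inr hG, SimpleGraph.dist_eq_one_iff_adj.mpr hadj]
  simp only [gInterval, Set.mem_setOf_eq, h1, h2, h3]

/-- crossing edges on walks -/
lemma walk_crossing {V : Type} {Γ : SimpleGraph V} {S : Set V} :
    ∀ {u v : V} (_ : Γ.Walk u v), u ∈ S → v ∉ S →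
    ∃ a b, Γ.Adj a b ∧ a ∈ S ∧ b ∉ S := by
  intro u v p
  induction p with
  | nil => intro h1 h2; exact absurd h1 h2
  | @cons u w v h p ih =>
    intro h1 h2
    by_cases hw : w ∈ S
    · exact ih hw h2
    · exact ⟨u, w, h, h1, hw⟩

def pim (H : Set (V ⊕ Σ j : J, ↥(L j))) : Set V := {x | .inl x ∈ H}

lemma pim_compl (H : Set (V ⊕ Σ j : J, ↥(L j))) : pim Hᶜ = (pim H)ᶜ := rfl

lemma pim_convex (hG : G.Connected) {H : Set (V ⊕ Σ j : J, ↥(L j))}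
    (hH : GConvex (glueGraph G L) H) : GConvex G (pim H) := by
  intro x hx y hy w hw
  exact hH _ hx _ hy (interval_inl hG hw)

lemma mem_pim_of_inr (hG : G.Connected) {H : Set (V ⊕ Σ j : J, ↥(L j))}
    (hconv : GConvex (glueGraph G L) H) (hne : (pim H).Nonempty)
    {b : Σ j : J, ↥(L j)} (hb : .inr b ∈ H) : (↑b.2 : V) ∈ pim H := by
  obtain ⟨y, hy⟩ := hne
  exact hconv _ hb _ hy (interval_vert hG b y)

lemma vert_char (hG : G.Connected) (hL : ∀ j, (L j).Nonempty ∧ (G.induce (L j)).Connected)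
    {H : Set (V ⊕ Σ j : J, ↥(L j))} (hH : IsHalfspace (glueGraph G L) H)
    (hpi : pim H = ∅) : ∃ j, ∀ w, w ∈ H ↔ ∃ x : ↥(L j), w = .inr ⟨j, x⟩ := by
  obtain ⟨⟨w₀, hw₀⟩, -, hconv, hconvc⟩ := hH
  obtain (x₀ | a) := w₀
  · exact absurd (Set.eq_empty_iff_forall_notMem.mp hpi x₀) (fun h => h hw₀)
  refine ⟨a.1, fun w => ⟨?_, ?_⟩⟩
  · intro hw
    obtain (x | b) := w
    · exact absurd hw (Set.eq_empty_iff_forall_notMem.mp hpi x)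
    · have hbj : b.1 = a.1 := by
        by_contra hj
        have := hconv _ hw _ hw₀ (interval_two_vert hG hj)
        exact Set.eq_empty_iff_forall_notMem.mp hpi _ this
      obtain ⟨bj, bx⟩ := b
      cases hbj
      exact ⟨bx, rfl⟩
  · rintro ⟨x, rfl⟩
    -- the set of top vertices of copy a.1 in H is "closed" under induced adjacency
    by_contra hx
    set S : Set ↥(L a.1) := {z | (.inr ⟨a.1, z⟩ : V ⊕ Σ j : J, ↥(L j)) ∈ H} with hS
    have haS : a.2 ∈ S := by
      show (.inr ⟨a.1, a.2⟩ : V ⊕ Σ j : J, ↥(L j)) ∈ H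
      exact hw₀
    have hxS : x ∉ S := hx
    obtain ⟨p⟩ := ((hL a.1).2).preconnected a.2 x
    obtain ⟨z, z', hadj, hz, hz'⟩ := walk_crossing p haS hxS
    rw [SimpleGraph.comap_adj] at hadj
    have hint := interval_boundary (L := L) hG
      (a := ⟨a.1, z⟩) (b := ⟨a.1, z'⟩) rfl hadj
    have h1 : (.inl (↑z : V) : V ⊕ Σ j : J, ↥(L j)) ∈ Hᶜ :=
      Set.eq_empty_iff_forall_notMem.mp hpi (↑z : V)
    have h2 : (.inr ⟨a.1, z'⟩ : V ⊕ Σ j : J, ↥(L j)) ∈ Hᶜ := hz'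
    exact (hconvc _ h1 _ h2 hint) hz

lemma IsHalfspace.compl {V : Type} {Γ : SimpleGraph V} {H : Set V}
    (h : IsHalfspace Γ H) : IsHalfspace Γ Hᶜ :=
  ⟨h.2.1, by rw [compl_compl]; exact h.1, h.2.2.2, by rw [compl_compl]; exact h.2.2.1⟩

lemma Crossing.compl_left {V : Type} {H K : Set V} (c : Crossing H K) : Crossing Hᶜ K :=
  ⟨c.2.2.1, c.2.2.2, by rw [compl_compl]; exact c.1, by rw [compl_compl]; exact c.2.1⟩

lemma Crossing.compl_right {V : Type} {H K : Set V} (c : Crossing H K) : Crossing H Kᶜ :=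
  ⟨c.2.1, by rw [compl_compl]; exact c.1, c.2.2.2, by rw [compl_compl]; exact c.2.2.1⟩

lemma vert_disjoint (hG : G.Connected) (hL : ∀ j, (L j).Nonempty ∧ (G.induce (L j)).Connected)
    {H K : Set (V ⊕ Σ j : J, ↥(L j))} (hH : IsHalfspace (glueGraph G L) H)
    (hK : IsHalfspace (glueGraph G L) K) (hpH : pim H = ∅) (hpK : pim K = ∅) :
    ¬ Crossing H K := by
  obtain ⟨j, hj⟩ := vert_char hG hL hH hpH
  obtain ⟨j', hj'⟩ := vert_char hG hL hK hpK
  by_cases hjj : j = j'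
  · subst hjj
    have hHK : H = K := by
      ext w; rw [hj, hj']
    rintro ⟨-, ⟨w, hw1, hw2⟩, -, -⟩
    rw [hHK] at hw1
    exact hw2 hw1
  · rintro ⟨⟨w, hw1, hw2⟩, -, -, -⟩
    obtain ⟨x, rfl⟩ := (hj w).mp hw1
    obtain ⟨x', hx'⟩ := (hj' _).mp hw2
    injection hx' with hx'
    exact hjj (congrArg Sigma.fst hx')

lemma corner (hG : G.Connected) {H K : Set (V ⊕ Σ j : J, ↥(L j))}
    (hcH : GConvex (glueGraph G L) H) (hcK : GConvex (glueGraph G L) K)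
    (hneH : (pim H).Nonempty) (hneK : (pim K).Nonempty)
    (hw : (H ∩ K).Nonempty) : (pim H ∩ pim K).Nonempty := by
  obtain ⟨w, hw1, hw2⟩ := hw
  obtain (x | b) := w
  · exact ⟨x, hw1, hw2⟩
  · exact ⟨↑b.2, mem_pim_of_inr hG hcH hneH hw1, mem_pim_of_inr hG hcK hneK hw2⟩

lemma glue_color (hG : G.Connected)
    (hL : ∀ j, (L j).Nonempty ∧ (G.induce (L j)).Connected) (m : ℕ)
    (Φ : Set V → ℕ)
    (h1 : ∀ H, IsHalfspace G H → Φ H < m ∧ Φ Hᶜ = Φ H)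
    (h2 : ∀ H K, IsHalfspace G H → IsHalfspace G K → Crossing H K → Φ H ≠ Φ K) :
    ∃ Φ' : Set (V ⊕ Σ j : J, ↥(L j)) → ℕ,
      (∀ H, IsHalfspace (glueGraph G L) H → Φ' H < m + 1 ∧ Φ' Hᶜ = Φ' H) ∧
      ∀ H K, IsHalfspace (glueGraph G L) H → IsHalfspace (glueGraph G L) K →
        Crossing H K → Φ' H ≠ Φ' K := by
  classical
  set W := glueGraph G L
  refine ⟨fun H => if pim H = ∅ ∨ pim H = Set.univ then m else Φ (pim H), ?_, ?_⟩
  · intro H hH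
    dsimp only
    by_cases hv : pim H = ∅ ∨ pim H = Set.univ
    · have hv' : pim Hᶜ = ∅ ∨ pim Hᶜ = Set.univ := by
        rw [pim_compl]
        rcases hv with hv | hv <;> simp [hv]
      rw [if_pos hv, if_pos hv']
      omega
    · push_neg at hv
      have hhalf : IsHalfspace G (pim H) :=
        ⟨hv.1, Set.nonempty_compl.mpr hv.2,
          pim_convex hG hH.2.2.1, by rw [← pim_compl]; exact pim_convex hG hH.2.2.2⟩
      have hv' : ¬ (pim Hᶜ = ∅ ∨ pim Hᶜ = Set.univ) := by
        rw [pim_compl]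
        push_neg
        constructor
        · exact Set.nonempty_compl.mpr hv.2
        · rw [Ne, Set.compl_univ_iff]
          exact Set.nonempty_iff_ne_empty.mp hv.1
      rw [if_neg hv', if_neg (by push_neg; exact hv)]
      refine ⟨(h1 _ hhalf).1.trans (by omega), ?_⟩
      rw [pim_compl]
      exact (h1 _ hhalf).2
  · intro H K hH hK hc
    dsimp only
    by_cases hvH : pim H = ∅ ∨ pim H = Set.univ
    · by_cases hvK : pim K = ∅ ∨ pim K = Set.univ
      · -- both vertical: crossing impossible
        exfalso
        rcases hvH with hvH | hvH <;> rcases hvK with hvK | hvK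
        · exact vert_disjoint hG hL hH hK hvH hvK hc
        · exact vert_disjoint hG hL hH (IsHalfspace.compl hK) hvH
            (by rw [pim_compl, hvK, Set.compl_univ]) (Crossing.compl_right hc)
        · exact vert_disjoint hG hL (IsHalfspace.compl hH) hK
            (by rw [pim_compl, hvH, Set.compl_univ]) hvK (Crossing.compl_left hc)
        · exact vert_disjoint hG hL (IsHalfspace.compl hH) (IsHalfspace.compl hK)
            (by rw [pim_compl, hvH, Set.compl_univ])
            (by rw [pim_compl, hvK, Set.compl_univ]) (Crossing.compl_right (Crossing.compl_left hc))
      · rw [if_pos hvH, if_neg hvK]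
        push_neg at hvK
        have : IsHalfspace G (pim K) :=
          ⟨hvK.1, Set.nonempty_compl.mpr hvK.2,
            pim_convex hG hK.2.2.1, by rw [← pim_compl]; exact pim_convex hG hK.2.2.2⟩
        have := (h1 _ this).1
        omega
    · by_cases hvK : pim K = ∅ ∨ pim K = Set.univ
      · rw [if_neg hvH, if_pos hvK]
        push_neg at hvH
        have : IsHalfspace G (pim H) :=
          ⟨hvH.1, Set.nonempty_compl.mpr hvH.2,
            pim_convex hG hH.2.2.1, by rw [← pim_compl]; exact pim_convex hG hH.2.2.2⟩
        have := (h1 _ this).1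
        omega
      · rw [if_neg hvH, if_neg hvK]
        push_neg at hvH hvK
        have hhH : IsHalfspace G (pim H) :=
          ⟨hvH.1, Set.nonempty_compl.mpr hvH.2,
            pim_convex hG hH.2.2.1, by rw [← pim_compl]; exact pim_convex hG hH.2.2.2⟩
        have hhK : IsHalfspace G (pim K) :=
          ⟨hvK.1, Set.nonempty_compl.mpr hvK.2,
            pim_convex hG hK.2.2.1, by rw [← pim_compl]; exact pim_convex hG hK.2.2.2⟩
        refine h2 _ _ hhH hhK ?_
        have e1 : (pim H)ᶜ = pim Hᶜ := (pim_compl H).symm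
        have e2 : (pim K)ᶜ = pim Kᶜ := (pim_compl K).symm
        refine ⟨corner hG hH.2.2.1 hK.2.2.1 hhH.1 hhK.1 hc.1, ?_, ?_, ?_⟩
        · rw [e2]
          exact corner hG hH.2.2.1 hK.2.2.2 hhH.1 (e2 ▸ hhK.2.1) hc.2.1
        · rw [e1]
          exact corner hG hH.2.2.2 hK.2.2.1 (e1 ▸ hhH.2.1) hhK.1 hc.2.2.1
        · rw [e1, e2]
          exact corner hG hH.2.2.2 hK.2.2.2 (e1 ▸ hhH.2.1) (e2 ▸ hhK.2.1) hc.2.2.2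

section Iso
variable {A B : Type} {Γ : SimpleGraph A} {Γ' : SimpleGraph B}

lemma iso_reachable (e : Γ ≃g Γ') {u v : A} (h : Γ.Reachable u v) :
    Γ'.Reachable (e u) (e v) := by
  obtain ⟨p⟩ := h
  exact ⟨p.map e.toHom⟩

lemma iso_dist_le (e : Γ ≃g Γ') (u v : A) : Γ'.dist (e u) (e v) ≤ Γ.dist u v := by
  by_cases h : Γ.Reachable u v
  · obtain ⟨p, hp⟩ := h.exists_walk_length_eq_dist
    calc Γ'.dist (e u) (e v) ≤ (p.map e.toHom).length := SimpleGraph.dist_le _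
      _ = Γ.dist u v := by rw [SimpleGraph.Walk.length_map, hp]
  · have h' : ¬ Γ'.Reachable (e u) (e v) := by
      intro h'
      have := iso_reachable e.symm h'
      exact h (by simpa using this)
    rw [SimpleGraph.dist_eq_zero_of_not_reachable h,
      SimpleGraph.dist_eq_zero_of_not_reachable h']

lemma iso_dist (e : Γ ≃g Γ') (u v : A) : Γ'.dist (e u) (e v) = Γ.dist u v := by
  refine le_antisymm (iso_dist_le e u v) ?_
  have := iso_dist_le e.symm (e u) (e v)
  simpa using this

lemma iso_interval (e : Γ ≃g Γ') {u v w : A} (h : w ∈ gInterval Γ u v) :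
    e w ∈ gInterval Γ' (e u) (e v) := by
  simp only [gInterval, Set.mem_setOf_eq, iso_dist] at *
  exact h

lemma iso_convex (e : Γ ≃g Γ') {H : Set A} (h : GConvex Γ H) : GConvex Γ' (⇑e '' H) := by
  rintro x ⟨x', hx', rfl⟩ y ⟨y', hy', rfl⟩ w hw
  have hw' : e (e.symm w) ∈ gInterval Γ' (e x') (e y') := by
    simpa using hw
  have : e.symm w ∈ gInterval Γ x' y' := by
    have := iso_interval e.symm hw'
    simpa using this
  exact ⟨e.symm w, h _ hx' _ hy' this, by simp⟩

lemma iso_image_compl (e : Γ ≃g Γ') (H : Set A) : ⇑e '' Hᶜ = (⇑e '' H)ᶜ := by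
  apply Set.image_compl_eq
  exact e.bijective

lemma iso_halfspace (e : Γ ≃g Γ') {H : Set A} (h : IsHalfspace Γ H) :
    IsHalfspace Γ' (⇑e '' H) := by
  refine ⟨h.1.image _, ?_, iso_convex e h.2.2.1, ?_⟩
  · rw [← iso_image_compl e]
    exact h.2.1.image _
  · rw [← iso_image_compl e]
    exact iso_convex e h.2.2.2

lemma iso_crossing (e : Γ ≃g Γ') {H K : Set A} (h : Crossing H K) :
    Crossing (⇑e '' H) (⇑e '' K) := by
  obtain ⟨c1, c2, c3, c4⟩ := h
  refine ⟨?_, ?_, ?_, ?_⟩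
  · rw [← Set.image_inter e.injective]; exact c1.image _
  · rw [← iso_image_compl e, ← Set.image_inter e.injective]; exact c2.image _
  · rw [← iso_image_compl e, ← Set.image_inter e.injective]; exact c3.image _
  · rw [← iso_image_compl e, ← iso_image_compl e, ← Set.image_inter e.injective]
    exact c4.image _

lemma iso_connected (e : Γ ≃g Γ') (h : Γ.Connected) : Γ'.Connected := by
  rw [SimpleGraph.connected_iff] at *
  refine ⟨fun u v => ?_, ⟨e h.2.some⟩⟩
  have := iso_reachable e (h.1 (e.symm u) (e.symm v))
  simpa using this

end Iso

end Glue

lemma Collapsible.connected {V : Type} {G : SimpleGraph V} {m : ℕ}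
    (h : Collapsible G m) : G.Connected := by
  induction h with
  | point G v hv =>
    rw [SimpleGraph.connected_iff]
    exact ⟨fun u w => by rw [hv u, hv w], ⟨v⟩⟩
  | glue hG L hL G' e ih =>
    exact Glue.iso_connected e.symm (Glue.glue_connected ih)


/-- If a cube complex admits a (regular) decomposition of length `m`, then its
hyperplanes are `m`-colorable: crossing hyperplanes get different colors, where a
hyperplane is encoded by its pair of complementary halfspaces. -/
theorem collapsible_hyperplanes_colorable {V : Type} (G : SimpleGraph V) (m : ℕ)
    (h : Collapsible G m) :
    ∃ Φ : Set V → ℕ,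
      (∀ H, IsHalfspace G H → Φ H < m ∧ Φ Hᶜ = Φ H) ∧
      ∀ H K, IsHalfspace G H → IsHalfspace G K → Crossing H K → Φ H ≠ Φ K := by
  induction h with
  | point G v hv =>
    refine ⟨fun _ => 0, ?_, ?_⟩
    · intro H hH
      obtain ⟨⟨x, hx⟩, ⟨y, hy⟩, -, -⟩ := hH
      exact (absurd (show x = y by rw [hv x, hv y]) (fun hxy => hy (hxy ▸ hx)) : False).elim
    · intro H K hH hK hc
      obtain ⟨⟨x, hx⟩, ⟨y, hy⟩, -, -⟩ := hH
      exact (absurd (show x = y by rw [hv x, hv y]) (fun hxy => hy (hxy ▸ hx)) : False).elim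
  | @glue V₀ G₀ m₀ hG₀ J L hL V' G' e ih =>
    obtain ⟨Φ, hΦ1, hΦ2⟩ := ih
    obtain ⟨Φ', hΦ'1, hΦ'2⟩ := Glue.glue_color hG₀.connected hL m₀ Φ hΦ1 hΦ2
    refine ⟨fun H => Φ' (⇑e '' H), ?_, ?_⟩
    · intro H hH
      have hH' := Glue.iso_halfspace e hH
      refine ⟨(hΦ'1 _ hH').1, ?_⟩
      show Φ' (⇑e '' Hᶜ) = Φ' (⇑e '' H)
      rw [Glue.iso_image_compl e]
      exact (hΦ'1 _ hH').2
    · intro H K hH hK hc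
      exact hΦ'2 _ _ (Glue.iso_halfspace e hH) (Glue.iso_halfspace e hK)
        (Glue.iso_crossing e hc)
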